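/- Let π_t ⊆ Λ²W* be the subspace spanned by e₁∧e₃ + e₂∧e₄, e₁∧e₄ + e₂∧e₅, e₁∧e₅ + e₂∧e₆. Let A ⊆ Λ²W* be a linear subspace such that every ω ∈ A has rank at most 4, and suppose A contains g·π_t for some g ∈ GL(W). Then there exists a 4-dimensional subspace U of W such that α(u,u') = 0 for all α ∈ A and all u, u' ∈ U; in particular A is not semistable. -/

import Mathlib

open Matrix

noncomputable section

abbrev W : Type := Fin 6 → ℂ
abbrev Form : Type := Matrix (Fin 6) (Fin 6) ℂ

/-- The skew-symmetric bilinear form associated to a matrix: `ω(u,v) = uᵀ M v`. -/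
def Form.apply (M : Form) (u v : W) : ℂ := u ⬝ᵥ M *ᵥ v

/-- A matrix represents a skew-symmetric (alternating) bilinear form iff `Mᵀ = -M`. -/
def Form.IsSkew (M : Form) : Prop := Mᵀ = -M

/-- Standard basis vectors of `W` (also used as the dual basis of `W*`). -/
def e (i : Fin 6) : Fin 6 → ℂ := Pi.single i 1

/-- Wedge of two covectors: `(φ∧ψ)(u,u') = φ(u)ψ(u') − ψ(u)φ(u')`. -/
def wedge (φ ψ : Fin 6 → ℂ) : Form := vecMulVec φ ψ - vecMulVec ψ φ

/-- Kernel of the linear map `u ↦ ω(u,·)`, i.e. of `u ↦ Mᵀ u`. -/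
def Form.kernel (M : Form) : Submodule ℂ W := LinearMap.ker (Matrix.mulVecLin Mᵀ)

/-- The action of `g ∈ GL(W)` on forms: `(g·ω)(u,u') = ω(gu,gu')`, as a linear map on forms. -/
def actLin (g : Matrix (Fin 6) (Fin 6) ℂ) : Form →ₗ[ℂ] Form where
  toFun M := gᵀ * M * g
  map_add' M N := by simp [add_mul, mul_add]
  map_smul' c M := by simp [mul_smul_comm, smul_mul_assoc]

/-- The geometric criterion for non-stability (Theorem 2.3(2)). -/
def Nonstable (A : Submodule ℂ Form) : Prop :=
  ∃ s : ℕ, s ∈ ({1, 2, 3} : Set ℕ) ∧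
    ∃ U U' : Submodule ℂ W, U ≤ U' ∧
      Module.finrank ℂ U = s ∧ Module.finrank ℂ U' = 6 - s ∧
      ∀ M ∈ A, ∀ u ∈ U, ∀ u' ∈ U', Form.apply M u u' = 0

/-- The geometric criterion for non-semistability (Theorem 2.3(1)). -/
def NonSemistable (A : Submodule ℂ Form) : Prop :=
  ∃ s : ℕ, s ∈ ({1, 2, 3} : Set ℕ) ∧
    ∃ U U' : Submodule ℂ W, U ≤ U' ∧
      Module.finrank ℂ U = s ∧ Module.finrank ℂ U' = 7 - s ∧
      ∀ M ∈ A, ∀ u ∈ U, ∀ u' ∈ U', Form.apply M u u' = 0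

/-- The plane `π_g` of general type. -/
def pi_g : Submodule ℂ Form :=
  Submodule.span ℂ {wedge (e 0) (e 3) + wedge (e 1) (e 4),
    wedge (e 0) (e 5) + wedge (e 2) (e 4),
    wedge (e 1) (e 5) - wedge (e 2) (e 3)}


/-- The plane `π_t`. -/
def pi_t : Submodule ℂ Form :=
  Submodule.span ℂ {wedge (e 0) (e 2) + wedge (e 1) (e 3),
    wedge (e 0) (e 3) + wedge (e 1) (e 4),
    wedge (e 0) (e 4) + wedge (e 1) (e 5)}

/-! ### Auxiliary material -/

set_option maxRecDepth 8000

section VecEval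
variable {α : Type*}
@[simp] lemma cv6_1 (x : α) (u : Fin 5 → α) : vecCons x u (1:Fin 6) = u 0 := rfl
@[simp] lemma cv6_2 (x : α) (u : Fin 5 → α) : vecCons x u (2:Fin 6) = u 1 := rfl
@[simp] lemma cv6_3 (x : α) (u : Fin 5 → α) : vecCons x u (3:Fin 6) = u 2 := rfl
@[simp] lemma cv6_4 (x : α) (u : Fin 5 → α) : vecCons x u (4:Fin 6) = u 3 := rfl
@[simp] lemma cv6_5 (x : α) (u : Fin 5 → α) : vecCons x u (5:Fin 6) = u 4 := rfl
@[simp] lemma cv5_1 (x : α) (u : Fin 4 → α) : vecCons x u (1:Fin 5) = u 0 := rfl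
@[simp] lemma cv5_2 (x : α) (u : Fin 4 → α) : vecCons x u (2:Fin 5) = u 1 := rfl
@[simp] lemma cv5_3 (x : α) (u : Fin 4 → α) : vecCons x u (3:Fin 5) = u 2 := rfl
@[simp] lemma cv5_4 (x : α) (u : Fin 4 → α) : vecCons x u (4:Fin 5) = u 3 := rfl
@[simp] lemma cv4_1 (x : α) (u : Fin 3 → α) : vecCons x u (1:Fin 4) = u 0 := rfl
@[simp] lemma cv4_2 (x : α) (u : Fin 3 → α) : vecCons x u (2:Fin 4) = u 1 := rfl
@[simp] lemma cv4_3 (x : α) (u : Fin 3 → α) : vecCons x u (3:Fin 4) = u 2 := rfl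
@[simp] lemma cv3_1 (x : α) (u : Fin 2 → α) : vecCons x u (1:Fin 3) = u 0 := rfl
@[simp] lemma cv3_2 (x : α) (u : Fin 2 → α) : vecCons x u (2:Fin 3) = u 1 := rfl
@[simp] lemma cv2_1 (x : α) (u : Fin 1 → α) : vecCons x u (1:Fin 2) = u 0 := rfl
@[simp] lemma fv1 : ((1:Fin 6):ℕ) = 1 := rfl
@[simp] lemma fv2 : ((2:Fin 6):ℕ) = 2 := rfl
@[simp] lemma fv3 : ((3:Fin 6):ℕ) = 3 := rfl
@[simp] lemma fv4 : ((4:Fin 6):ℕ) = 4 := rfl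
@[simp] lemma fv5 : ((5:Fin 6):ℕ) = 5 := rfl
end VecEval

section Pencil
open Polynomial

def Jm : Form := !![0,0,1,0,0,0; 0,0,0,1,0,0; -1,0,0,0,0,0; 0,-1,0,0,0,0; 0,0,0,0,0,0; 0,0,0,0,0,0]

def Cp (N : Form) : Matrix (Fin 6) (Fin 6) ℂ[X] :=
  Matrix.of fun i j => if j = 4 ∨ j = 5 then C (N i j) else C (Jm i j) + X * C (N i j)

def Cm (N : Form) (t : ℂ) : Form :=
  Matrix.of fun i j => if j = 4 ∨ j = 5 then N i j else Jm i j + t * N i j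

lemma cmap (N : Form) (t : ℂ) : (Cp N).map (eval t) = Cm N t := by
  ext i j
  by_cases h : j = 4 ∨ j = 5 <;> simp [Cp, Cm, h] <;> ring

lemma factor (N : Form) (t : ℂ) : Jm + t • N = Cm N t * diagonal ![1,1,1,1,t,t] := by
  ext i j
  rw [Matrix.mul_diagonal]
  fin_cases j <;> fin_cases i <;> simp [Jm, Cm, Matrix.vecHead, Matrix.vecTail] <;> ring

lemma detC0' (N : Form) :
    (!![0,0,1,0,N 0 4,N 0 5; 0,0,0,1,N 1 4,N 1 5; -1,0,0,0,N 2 4,N 2 5;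
       0,-1,0,0,N 3 4,N 3 5; 0,0,0,0,N 4 4,N 4 5; 0,0,0,0,N 5 4,N 5 5] : Form).det
    = N 4 4 * N 5 5 - N 4 5 * N 5 4 := by
  have h : (!![0,0,1,0,N 0 4,N 0 5; 0,0,0,1,N 1 4,N 1 5; -1,0,0,0,N 2 4,N 2 5;
       0,-1,0,0,N 3 4,N 3 5; 0,0,0,0,N 4 4,N 4 5; 0,0,0,0,N 5 4,N 5 5] : Form)
      = (Matrix.fromBlocks (!![0,0,1,0;0,0,0,1;-1,0,0,0;0,-1,0,0] : Matrix (Fin 4) (Fin 4) ℂ)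
          (Matrix.of fun (i : Fin 4) (j : Fin 2) => N (Fin.castLE (by norm_num) i) (Fin.natAdd 4 j))
          (0 : Matrix (Fin 2) (Fin 4) ℂ)
          (!![N 4 4, N 4 5; N 5 4, N 5 5])).submatrix finSumFinEquiv.symm finSumFinEquiv.symm := by
    ext i j
    fin_cases i <;> fin_cases j <;> rfl
  rw [h, Matrix.det_submatrix_equiv_self, Matrix.det_fromBlocks_zero₂₁, Matrix.det_fin_two]
  have h4 : (!![0,0,1,0;0,0,0,1;-1,0,0,0;0,-1,0,0] : Matrix (Fin 4) (Fin 4) ℂ).det = 1 := by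
    rw [Matrix.det_succ_row_zero]; simp [Fin.sum_univ_succ, Matrix.det_succ_row_zero, Fin.succAbove]
  rw [h4]
  rw [one_mul]; rfl

lemma detC0 (N : Form) : (Cm N 0).det = N 4 4 * N 5 5 - N 4 5 * N 5 4 := by
  have h : Cm N 0 = !![0,0,1,0,N 0 4,N 0 5; 0,0,0,1,N 1 4,N 1 5; -1,0,0,0,N 2 4,N 2 5;
       0,-1,0,0,N 3 4,N 3 5; 0,0,0,0,N 4 4,N 4 5; 0,0,0,0,N 5 4,N 5 5] := by
    ext i j
    fin_cases i <;> fin_cases j <;> simp [Cm, Jm, Matrix.vecHead, Matrix.vecTail] <;> rfl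
  rw [h, detC0']

lemma key (N : Form) (hsk : Nᵀ = -N) (hdet : ∀ t : ℂ, (Jm + t • N).det = 0) : N 4 5 = 0 := by
  have heval : ∀ t : ℂ, (Cp N).det.eval t = (Cm N t).det := by
    intro t
    have h1 := (evalRingHom t).map_det (Cp N)
    simp only [RingHom.mapMatrix_apply, coe_evalRingHom] at h1
    rw [h1, cmap]
  have hC : ∀ t : ℂ, t ≠ 0 → ((Cp N).det.eval t = 0) := by
    intro t ht
    rw [heval]
    have h2 := hdet t
    rw [factor N t, Matrix.det_mul] at h2
    have h3 : (diagonal ![1,1,1,1,t,t] : Form).det = t * t := by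
      rw [Matrix.det_diagonal]
      simp [Fin.prod_univ_six]
    rw [h3] at h2
    rcases mul_eq_zero.mp h2 with h | h
    · exact h
    · exact absurd (mul_eq_zero.mp h) (by simp [ht])
  have hz : (Cp N).det = 0 := by
    apply Polynomial.eq_zero_of_infinite_isRoot
    apply Set.Infinite.mono (s := {x : ℂ | x ≠ 0})
    · intro x hx; exact hC x hx
    · exact Set.Finite.infinite_compl (Set.finite_singleton 0)
  have h0 : (Cp N).det.eval 0 = 0 := by rw [hz]; simp
  rw [heval, detC0] at h0
  have h44 : N 4 4 = 0 := by
    have := congrFun (congrFun hsk 4) 4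
    simp only [Matrix.transpose_apply, Matrix.neg_apply] at this
    linear_combination this / 2
  have h55 : N 5 5 = 0 := by
    have := congrFun (congrFun hsk 5) 5
    simp only [Matrix.transpose_apply, Matrix.neg_apply] at this
    linear_combination this / 2
  have h54 : N 5 4 = - N 4 5 := by
    have := congrFun (congrFun hsk 5) 4
    simp only [Matrix.transpose_apply, Matrix.neg_apply] at this
    linear_combination this
  rw [h44, h55, h54] at h0
  have : N 4 5 * N 4 5 = 0 := by linear_combination h0
  exact mul_self_eq_zero.mp this

end Pencil

section IntMatrices

def Jz : Matrix (Fin 6) (Fin 6) ℤ := !![0,0,1,0,0,0; 0,0,0,1,0,0; -1,0,0,0,0,0; 0,-1,0,0,0,0; 0,0,0,0,0,0; 0,0,0,0,0,0]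
def W2z : Matrix (Fin 6) (Fin 6) ℤ := !![0,0,0,1,0,0; 0,0,0,0,1,0; 0,0,0,0,0,0; -1,0,0,0,0,0; 0,-1,0,0,0,0; 0,0,0,0,0,0]
def W3z : Matrix (Fin 6) (Fin 6) ℤ := !![0,0,0,0,1,0; 0,0,0,0,0,1; 0,0,0,0,0,0; 0,0,0,0,0,0; -1,0,0,0,0,0; 0,-1,0,0,0,0]
def P2z : Matrix (Fin 6) (Fin 6) ℤ := !![1,0,0,0,0,0; 0,1,0,0,0,0; 0,0,0,0,1,0; 0,0,0,0,0,1; 0,0,1,0,0,0; 0,0,0,1,0,0]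
def P3z : Matrix (Fin 6) (Fin 6) ℤ := !![1,0,0,0,0,0; 0,1,0,0,0,0; 0,0,0,0,1,0; 0,0,1,0,0,0; 0,0,0,1,0,0; 0,0,0,0,0,1]
def P4z : Matrix (Fin 6) (Fin 6) ℤ := !![1,0,0,0,0,0; 0,1,0,0,0,0; 0,0,1,0,1,0; 0,0,0,0,-1,0; 0,0,0,1,1,0; 0,0,0,0,0,1]
def P5z : Matrix (Fin 6) (Fin 6) ℤ := !![1,0,0,0,0,0; 0,1,0,0,0,0; 0,0,0,0,1,0; 0,0,1,0,0,1; 0,0,0,0,0,-1; 0,0,0,1,0,1]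
def P6z : Matrix (Fin 6) (Fin 6) ℤ := !![1,0,0,0,0,0; 0,1,0,0,0,0; 0,0,1,0,1,0; 0,0,0,1,0,1; 0,0,0,0,-1,0; 0,0,0,0,0,-1]

def castM (A : Matrix (Fin 6) (Fin 6) ℤ) : Form := A.map (Int.castRingHom ℂ)

lemma castM_mul (A B : Matrix (Fin 6) (Fin 6) ℤ) : castM (A * B) = castM A * castM B :=
  Matrix.map_mul
lemma castM_transpose (A : Matrix (Fin 6) (Fin 6) ℤ) : castM Aᵀ = (castM A)ᵀ := rfl
lemma castM_add (A B : Matrix (Fin 6) (Fin 6) ℤ) : castM (A + B) = castM A + castM B := by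
  ext i j; simp [castM]
lemma castM_one : castM 1 = 1 := by
  ext i j; simp [castM, Matrix.map_apply, Matrix.one_apply, apply_ite]

lemma jm_cast : castM Jz = Jm := by
  ext i j
  fin_cases i <;> fin_cases j <;> norm_num [castM, Jz, Jm, Matrix.map_apply]

lemma w1_eq : wedge (e 0) (e 2) + wedge (e 1) (e 3) = castM Jz := by
  ext i j
  fin_cases i <;> fin_cases j <;>
    norm_num [wedge, e, Matrix.vecMulVec_apply, Pi.single_apply, castM, Jz,
      Matrix.map_apply, Fin.ext_iff] <;> decide

lemma w2_eq : wedge (e 0) (e 3) + wedge (e 1) (e 4) = castM W2z := by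
  ext i j
  fin_cases i <;> fin_cases j <;>
    norm_num [wedge, e, Matrix.vecMulVec_apply, Pi.single_apply, castM, W2z,
      Matrix.map_apply, Fin.ext_iff] <;> decide

lemma w3_eq : wedge (e 0) (e 4) + wedge (e 1) (e 5) = castM W3z := by
  ext i j
  fin_cases i <;> fin_cases j <;>
    norm_num [wedge, e, Matrix.vecMulVec_apply, Pi.single_apply, castM, W3z,
      Matrix.map_apply, Fin.ext_iff] <;> decide

lemma entry2 (β : Form) : ((castM P2z)ᵀ * β * castM P2z) 4 5 = β 2 3 := by
  norm_num [Matrix.mul_apply, Fin.sum_univ_six, castM, P2z, Matrix.map_apply, Matrix.vecHead, Matrix.vecTail, Function.comp]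
lemma entry3 (β : Form) : ((castM P3z)ᵀ * β * castM P3z) 4 5 = β 2 5 := by
  norm_num [Matrix.mul_apply, Fin.sum_univ_six, castM, P3z, Matrix.map_apply, Matrix.vecHead, Matrix.vecTail, Function.comp]
lemma entry4 (β : Form) : ((castM P4z)ᵀ * β * castM P4z) 4 5 = β 2 5 - β 3 5 + β 4 5 := by
  norm_num [Matrix.mul_apply, Fin.sum_univ_six, castM, P4z, Matrix.map_apply, Matrix.vecHead, Matrix.vecTail, Function.comp]; ring
lemma entry5 (β : Form) : ((castM P5z)ᵀ * β * castM P5z) 4 5 = β 2 3 - β 2 4 + β 2 5 := by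
  norm_num [Matrix.mul_apply, Fin.sum_univ_six, castM, P5z, Matrix.map_apply, Matrix.vecHead, Matrix.vecTail, Function.comp]; ring
lemma entry6 (β : Form) : ((castM P6z)ᵀ * β * castM P6z) 4 5 = β 2 3 - β 2 5 - β 4 3 + β 4 5 := by
  norm_num [Matrix.mul_apply, Fin.sum_univ_six, castM, P6z, Matrix.map_apply, Matrix.vecHead, Matrix.vecTail, Function.comp]; ring

end IntMatrices

lemma apply_cong (P M : Form) (v w : W) :
    Form.apply (Pᵀ * M * P) v w = Form.apply M (P *ᵥ v) (P *ᵥ w) := by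
  simp [Form.apply, ← Matrix.mulVec_mulVec, Matrix.dotProduct_mulVec, Matrix.vecMul_transpose,
    Matrix.mul_assoc]

/-- a linear system of generic rank ≤ 4 containing a translate of `π_t`
admits a 4-dimensional isotropic subspace; in particular it is not semistable. -/
theorem statement5 (A : Submodule ℂ Form) (hA : ∀ M ∈ A, Form.IsSkew M)
    (hrk : ∀ M ∈ A, Matrix.rank M ≤ 4)
    (g : GL (Fin 6) ℂ)
    (hg : Submodule.map (actLin (g : Matrix (Fin 6) (Fin 6) ℂ)) pi_t ≤ A) :
    (∃ U : Submodule ℂ W, Module.finrank ℂ U = 4 ∧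
      ∀ α ∈ A, ∀ u ∈ U, ∀ u' ∈ U, Form.apply α u u' = 0) ∧ NonSemistable A := by
  classical
  set gm : Matrix (Fin 6) (Fin 6) ℂ := (g : Matrix (Fin 6) (Fin 6) ℂ) with hgm
  set gi : Matrix (Fin 6) (Fin 6) ℂ := ((g⁻¹ : GL (Fin 6) ℂ) : Matrix (Fin 6) (Fin 6) ℂ) with hgidef
  have hmul1 : gm * gi = 1 := by
    have := g.mul_inv
    exact_mod_cast this
  have hmul2 : gi * gm = 1 := by
    have := g.inv_mul
    exact_mod_cast this
  -- determinant vanishing on A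
  have hdetA : ∀ M ∈ A, M.det = 0 := by
    intro M hM
    by_contra h
    have hu : IsUnit M := (Matrix.isUnit_iff_isUnit_det M).mpr (isUnit_iff_ne_zero.mpr h)
    have hr := Matrix.rank_of_isUnit M hu
    have h4 := hrk M hM
    rw [hr] at h4
    simp at h4
  -- generators of pi_t
  have hsub : ({wedge (e 0) (e 2) + wedge (e 1) (e 3),
      wedge (e 0) (e 3) + wedge (e 1) (e 4),
      wedge (e 0) (e 4) + wedge (e 1) (e 5)} : Set Form) ⊆ (pi_t : Set Form) :=
    Submodule.subset_span
  have hg1 : castM Jz ∈ pi_t := by rw [← w1_eq]; exact hsub (Set.mem_insert _ _)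
  have hg2 : castM W2z ∈ pi_t := by
    rw [← w2_eq]; exact hsub (Set.mem_insert_of_mem _ (Set.mem_insert _ _))
  have hg3 : castM W3z ∈ pi_t := by
    rw [← w3_eq]; exact hsub (Set.mem_insert_of_mem _ (Set.mem_insert_of_mem _ rfl))
  have hg12 : castM (Jz + W2z) ∈ pi_t := by rw [castM_add]; exact pi_t.add_mem hg1 hg2
  have hg23 : castM (W2z + W3z) ∈ pi_t := by rw [castM_add]; exact pi_t.add_mem hg2 hg3
  have hg13 : castM (Jz + W3z) ∈ pi_t := by rw [castM_add]; exact pi_t.add_mem hg1 hg3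
  -- the core vanishing statement
  have core : ∀ α ∈ A, ∀ w w' : W, w 0 = 0 → w 1 = 0 → w' 0 = 0 → w' 1 = 0 →
      Form.apply (giᵀ * α * gi) w w' = 0 := by
    intro α hα w w' hw0 hw1 hw0' hw1'
    set β : Form := giᵀ * α * gi with hβ
    have hskα : αᵀ = -α := hA α hα
    have hskβ : βᵀ = -β := by
      rw [hβ, Matrix.transpose_mul, Matrix.transpose_mul, Matrix.transpose_transpose, hskα]
      simp [Matrix.mul_assoc]
    have hdet : ∀ (Mz : Matrix (Fin 6) (Fin 6) ℤ), castM Mz ∈ pi_t →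
        ∀ t : ℂ, (castM Mz + t • β).det = 0 := by
      intro Mz hM t
      have hm : gmᵀ * castM Mz * gm ∈ A := hg ⟨castM Mz, hM, rfl⟩
      have hel : gmᵀ * castM Mz * gm + t • α ∈ A := A.add_mem hm (A.smul_mem t hα)
      have h0 : (gmᵀ * castM Mz * gm + t • α).det = 0 := hdetA _ hel
      have h1 : giᵀ * gmᵀ = 1 := by
        rw [← Matrix.transpose_mul, hmul1, Matrix.transpose_one]
      have hfac : castM Mz + t • β = giᵀ * (gmᵀ * castM Mz * gm + t • α) * gi := by
        rw [Matrix.mul_add, Matrix.add_mul]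
        congr 1
        · have : giᵀ * (gmᵀ * castM Mz * gm) * gi = (giᵀ * gmᵀ) * castM Mz * (gm * gi) := by
            simp only [Matrix.mul_assoc]
          rw [this, h1, hmul1, Matrix.one_mul, Matrix.mul_one]
        · rw [Matrix.mul_smul, Matrix.smul_mul, hβ]
      rw [hfac, Matrix.det_mul, Matrix.det_mul, h0, mul_zero, zero_mul]
    have caseL : ∀ (Mz Pz : Matrix (Fin 6) (Fin 6) ℤ), Pzᵀ * Mz * Pz = Jz → castM Mz ∈ pi_t →
        ((castM Pz)ᵀ * β * castM Pz) 4 5 = 0 := by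
      intro Mz Pz hcz hMem
      have hskN : ((castM Pz)ᵀ * β * castM Pz)ᵀ = -((castM Pz)ᵀ * β * castM Pz) := by
        rw [Matrix.transpose_mul, Matrix.transpose_mul, Matrix.transpose_transpose, hskβ]
        simp [Matrix.mul_assoc]
      apply key _ hskN
      intro t
      have hcong : (castM Pz)ᵀ * castM Mz * castM Pz = Jm := by
        rw [← castM_transpose, ← castM_mul, ← castM_mul, hcz, jm_cast]
      have hid : Jm + t • ((castM Pz)ᵀ * β * castM Pz)
          = (castM Pz)ᵀ * (castM Mz + t • β) * castM Pz := by
        rw [← hcong, Matrix.mul_add, Matrix.add_mul, Matrix.mul_smul, Matrix.smul_mul]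
      rw [hid, Matrix.det_mul, Matrix.det_mul, hdet Mz hMem t, mul_zero, zero_mul]
    have r1 : β 4 5 = 0 := by
      have h := caseL Jz 1 (by decide) hg1
      rwa [castM_one, Matrix.transpose_one, Matrix.one_mul, Matrix.mul_one] at h
    have r2 : β 2 3 = 0 := by
      have h := caseL W3z P2z (by decide) hg3
      rwa [entry2] at h
    have r3 : β 2 5 = 0 := by
      have h := caseL W2z P3z (by decide) hg2
      rwa [entry3] at h
    have r4 : β 2 5 - β 3 5 + β 4 5 = 0 := by
      have h := caseL (Jz + W2z) P4z (by decide) hg12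
      rwa [entry4] at h
    have r5 : β 2 3 - β 2 4 + β 2 5 = 0 := by
      have h := caseL (W2z + W3z) P5z (by decide) hg23
      rwa [entry5] at h
    have r6 : β 2 3 - β 2 5 - β 4 3 + β 4 5 = 0 := by
      have h := caseL (Jz + W3z) P6z (by decide) hg13
      rwa [entry6] at h
    have hskE : ∀ i j : Fin 6, β j i = -β i j := by
      intro i j
      have := congrFun (congrFun hskβ i) j
      simpa using this
    have diag : ∀ i : Fin 6, β i i = 0 := by
      intro i
      have := hskE i i
      linear_combination this / 2
    have b35 : β 3 5 = 0 := by linear_combination r3 + r1 - r4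
    have b24 : β 2 4 = 0 := by linear_combination r2 + r3 - r5
    have b43 : β 4 3 = 0 := by linear_combination r2 - r3 + r1 - r6
    have b32 : β 3 2 = 0 := by linear_combination hskE 2 3 - r2
    have b42 : β 4 2 = 0 := by linear_combination hskE 2 4 - b24
    have b52 : β 5 2 = 0 := by linear_combination hskE 2 5 - r3
    have b34 : β 3 4 = 0 := by linear_combination hskE 4 3 - b43
    have b53 : β 5 3 = 0 := by linear_combination hskE 3 5 - b35
    have b54 : β 5 4 = 0 := by linear_combination hskE 4 5 - r1
    have b22 := diag 2
    have b33 := diag 3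
    have b44 := diag 4
    have b55 := diag 5
    show w ⬝ᵥ β *ᵥ w' = 0
    simp only [dotProduct, Matrix.mulVec, Fin.sum_univ_six]
    rw [hw0, hw1, hw0', hw1', r1, r2, r3, b35, b24, b43, b32, b42, b52, b34, b53, b54,
      b22, b33, b44, b55]
    ring
  -- the subspace U
  have hli4 : LinearIndependent ℂ ![e 2, e 3, e 4, e 5] := by
    rw [Fintype.linearIndependent_iff]
    intro c hc i
    fin_cases i
    · simpa [Fin.sum_univ_four, e, Pi.single_apply, Fin.ext_iff, Matrix.vecHead, Matrix.vecTail] using congrFun hc 2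
    · simpa [Fin.sum_univ_four, e, Pi.single_apply, Fin.ext_iff, Matrix.vecHead, Matrix.vecTail] using congrFun hc 3
    · simpa [Fin.sum_univ_four, e, Pi.single_apply, Fin.ext_iff, Matrix.vecHead, Matrix.vecTail] using congrFun hc 4
    · simpa [Fin.sum_univ_four, e, Pi.single_apply, Fin.ext_iff, Matrix.vecHead, Matrix.vecTail] using congrFun hc 5
  have hli3 : LinearIndependent ℂ ![e 2, e 3, e 4] := by
    rw [Fintype.linearIndependent_iff]
    intro c hc i
    fin_cases i
    · simpa [Fin.sum_univ_three, e, Pi.single_apply, Fin.ext_iff, Matrix.vecHead, Matrix.vecTail] using congrFun hc 2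
    · simpa [Fin.sum_univ_three, e, Pi.single_apply, Fin.ext_iff, Matrix.vecHead, Matrix.vecTail] using congrFun hc 3
    · simpa [Fin.sum_univ_three, e, Pi.single_apply, Fin.ext_iff, Matrix.vecHead, Matrix.vecTail] using congrFun hc 4
  set U0 : Submodule ℂ W := Submodule.span ℂ (Set.range ![e 2, e 3, e 4, e 5]) with hU0
  set U0' : Submodule ℂ W := Submodule.span ℂ (Set.range ![e 2, e 3, e 4]) with hU0'
  let giLin : W ≃ₗ[ℂ] W := LinearEquiv.ofLinear (Matrix.mulVecLin gi) (Matrix.mulVecLin gm)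
    (by rw [← Matrix.mulVecLin_mul, hmul2, Matrix.mulVecLin_one])
    (by rw [← Matrix.mulVecLin_mul, hmul1, Matrix.mulVecLin_one])
  have hfr4 : Module.finrank ℂ U0 = 4 := by
    rw [hU0, finrank_span_eq_card hli4]; simp
  have hfr3 : Module.finrank ℂ U0' = 3 := by
    rw [hU0', finrank_span_eq_card hli3]; simp
  set U : Submodule ℂ W := U0.map (giLin : W →ₗ[ℂ] W) with hU
  set U' : Submodule ℂ W := U0'.map (giLin : W →ₗ[ℂ] W) with hU'
  have hfrU : Module.finrank ℂ U = 4 := by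
    rw [hU, LinearEquiv.finrank_map_eq]; exact hfr4
  have hfrU' : Module.finrank ℂ U' = 3 := by
    rw [hU', LinearEquiv.finrank_map_eq]; exact hfr3
  have hUle : U' ≤ U := by
    rw [hU, hU']
    refine Submodule.map_mono (Submodule.span_mono ?_)
    rintro x ⟨i, rfl⟩
    fin_cases i
    · exact ⟨0, rfl⟩
    · exact ⟨1, rfl⟩
    · exact ⟨2, rfl⟩
  have hcoords : ∀ v ∈ U0, v 0 = 0 ∧ v 1 = 0 := by
    have hle : U0 ≤ LinearMap.ker (LinearMap.proj (R := ℂ) (φ := fun _ : Fin 6 => ℂ) 0)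
        ⊓ LinearMap.ker (LinearMap.proj (R := ℂ) (φ := fun _ : Fin 6 => ℂ) 1) := by
      rw [hU0, Submodule.span_le]
      rintro x ⟨i, rfl⟩
      fin_cases i <;>
        simp [Submodule.mem_inf, LinearMap.mem_ker, LinearMap.proj_apply, e, Pi.single_apply,
          Matrix.vecHead, Matrix.vecTail, Fin.ext_iff]
    intro v hv
    have hm := hle hv
    rw [Submodule.mem_inf] at hm
    simp only [LinearMap.mem_ker, LinearMap.proj_apply] at hm
    exact hm
  have hiso : ∀ α ∈ A, ∀ u ∈ U, ∀ u' ∈ U, Form.apply α u u' = 0 := by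
    intro α hα u hu u' hu'
    rw [hU] at hu hu'
    obtain ⟨w, hw, rfl⟩ := hu
    obtain ⟨w', hw', rfl⟩ := hu'
    have h1 : (giLin : W →ₗ[ℂ] W) w = gi *ᵥ w := rfl
    have h2 : (giLin : W →ₗ[ℂ] W) w' = gi *ᵥ w' := rfl
    rw [h1, h2, ← apply_cong]
    exact core α hα w w' (hcoords w hw).1 (hcoords w hw).2 (hcoords w' hw').1 (hcoords w' hw').2
  refine ⟨⟨U, hfrU, hiso⟩, ⟨3, by norm_num, U', U, hUle, hfrU', by rw [hfrU], ?_⟩⟩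
  intro M hM u hu u' hu'
  exact hiso M hM u (hUle hu) u' hu'
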